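/- Let λ_1 be a local maximal value of Φ(X)=C(X,X,X) on the unit sphere attained at e_1, and let X be a unit vector orthogonal to e_1. Then k(e_1∧X) ≤ λ_1²/4, with equality if and only if X is an eigenvector of K_{e_1} with eigenvalue λ_1/2. -/

import Mathlib

open RealInnerProductSpace

/-- First-order condition: at a local max of `Φ` on the sphere, the gradient
`K e₁ e₁` is orthogonal to every unit vector orthogonal to `e₁`. -/
lemma first_order_condition
    {V : Type*} [NormedAddCommGroup V] [InnerProductSpace ℝ V]
    (K : V →ₗ[ℝ] V →ₗ[ℝ] V)
    (hsymm : ∀ X Y : V, K X Y = K Y X)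
    (hadj : ∀ X Y Z : V, ⟪K X Y, Z⟫ = ⟪Y, K X Z⟫)
    (e₁ : V) (he₁ : ‖e₁‖ = 1)
    (hmax : IsLocalMaxOn (fun X : V => ⟪X, K X X⟫) {X : V | ‖X‖ = 1} e₁)
    (W : V) (hW : ‖W‖ = 1) (hWe : ⟪W, e₁⟫ = 0) :
    ⟪W, K e₁ e₁⟫ = 0 := by
  have hWe' : ⟪e₁, W⟫ = 0 := by rw [real_inner_comm]; exact hWe
  have hee : ⟪e₁, e₁⟫ = 1 := by
    rw [real_inner_self_eq_norm_sq, he₁]; norm_num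
  have hWW : ⟪W, W⟫ = 1 := by
    rw [real_inner_self_eq_norm_sq, hW]; norm_num
  have r1 : ⟪e₁, K e₁ W⟫ = ⟪W, K e₁ e₁⟫ := by
    rw [← hadj e₁ e₁ W]; exact real_inner_comm _ _
  have r2 : ⟪e₁, K W e₁⟫ = ⟪W, K e₁ e₁⟫ := by rw [hsymm W e₁]; exact r1
  have r3 : ⟪e₁, K W W⟫ = ⟪W, K e₁ W⟫ := by
    rw [← hadj W e₁ W, hsymm W e₁]; exact real_inner_comm _ _
  have r4 : ⟪W, K W e₁⟫ = ⟪W, K e₁ W⟫ := by rw [hsymm W e₁]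
  set a := ⟪e₁, K e₁ e₁⟫ with ha
  set b := ⟪W, K e₁ e₁⟫ with hb
  set d := ⟪W, K e₁ W⟫ with hd
  set e₀ := ⟪W, K W W⟫ with he₀
  set γ : ℝ → V := fun t => Real.cos t • e₁ + Real.sin t • W with hγ
  have hγ0 : γ 0 = e₁ := by simp [hγ]
  set g : ℝ → ℝ := fun t =>
    a * Real.cos t ^ 3 + 3 * b * (Real.cos t ^ 2 * Real.sin t)
      + 3 * d * (Real.cos t * Real.sin t ^ 2) + e₀ * Real.sin t ^ 3 with hg
  have hfe : ∀ t, ⟪γ t, K (γ t) (γ t)⟫ = g t := by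
    intro t
    simp only [hγ, hg, map_add, map_smul, LinearMap.add_apply, LinearMap.smul_apply,
      inner_add_left, inner_add_right, real_inner_smul_left, real_inner_smul_right]
    rw [r1, r2, r3, r4, ← ha, ← hb, ← hd, ← he₀]
    ring
  have hγS : ∀ t, γ t ∈ {X : V | ‖X‖ = 1} := by
    intro t
    have h2 : ‖γ t‖ ^ 2 = 1 := by
      rw [← real_inner_self_eq_norm_sq]
      simp only [hγ, inner_add_left, inner_add_right, real_inner_smul_left,
        real_inner_smul_right, hee, hWW, hWe, hWe']
      nlinarith [Real.sin_sq_add_cos_sq t]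
    have : ‖γ t‖ = 1 := by
      rw [← Real.sqrt_sq (norm_nonneg (γ t)), h2, Real.sqrt_one]
    exact this
  have hT : Filter.Tendsto γ (nhds 0) (nhdsWithin e₁ {X : V | ‖X‖ = 1}) := by
    apply tendsto_nhdsWithin_of_tendsto_nhds_of_eventually_within
    · have hc : Continuous γ :=
        (Real.continuous_cos.smul continuous_const).add
          (Real.continuous_sin.smul continuous_const)
      simpa [hγ0] using hc.tendsto 0
    · exact Filter.Eventually.of_forall hγS
  have hmaxg : IsLocalMax g 0 := by
    have hev := hT.eventually hmax
    have hg0 : g 0 = ⟪e₁, K e₁ e₁⟫ := by rw [← hfe 0, hγ0]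
    filter_upwards [hev] with t ht
    have : ⟪γ t, K (γ t) (γ t)⟫ ≤ ⟪e₁, K e₁ e₁⟫ := ht
    rw [hfe t] at this
    rw [hg0]; exact this
  have hderiv : HasDerivAt g (3 * b) 0 := by
    have hc : HasDerivAt Real.cos (-Real.sin 0) 0 := Real.hasDerivAt_cos 0
    have hs : HasDerivAt Real.sin (Real.cos 0) 0 := Real.hasDerivAt_sin 0
    have h1 := (hc.pow 3).const_mul a
    have h2 := ((hc.pow 2).mul hs).const_mul (3 * b)
    have h3 := (hc.mul (hs.pow 2)).const_mul (3 * d)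
    have h4 := (hs.pow 3).const_mul e₀
    have h : HasDerivAt g _ 0 := ((h1.add h2).add h3).add h4
    convert h using 1
    simp [Real.sin_zero, Real.cos_zero]
  have h0 : (3 : ℝ) * b = 0 := hmaxg.hasDerivAt_eq_zero hderiv
  linarith

/-- If `Φ(X) = C(X,X,X)` attains a local maximum `λ₁` at `e₁` and `X` is a unit
vector orthogonal to `e₁`, then `k(e₁ ∧ X) ≤ λ₁²/4`, with equality iff `X` is an
eigenvector of `K_{e₁}` with eigenvalue `λ₁/2`. -/
theorem curvature_with_max_direction_bound
    {V : Type*} [NormedAddCommGroup V] [InnerProductSpace ℝ V]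
    [FiniteDimensional ℝ V]
    (K : V →ₗ[ℝ] V →ₗ[ℝ] V)
    (hsymm : ∀ X Y : V, K X Y = K Y X)
    (hadj : ∀ X Y Z : V, ⟪K X Y, Z⟫ = ⟪Y, K X Z⟫)
    (e₁ : V) (he₁ : ‖e₁‖ = 1)
    (hmax : IsLocalMaxOn (fun X : V => ⟪X, K X X⟫) {X : V | ‖X‖ = 1} e₁)
    (l₁ : ℝ) (hl₁ : ⟪e₁, K e₁ e₁⟫ = l₁)
    (X : V) (hX : ‖X‖ = 1) (hXe : ⟪X, e₁⟫ = 0) :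
    ⟪K e₁ e₁, K X X⟫ - ⟪K e₁ X, K e₁ X⟫ ≤ l₁ ^ 2 / 4 ∧
      (⟪K e₁ e₁, K X X⟫ - ⟪K e₁ X, K e₁ X⟫ = l₁ ^ 2 / 4 ↔
        K e₁ X = (l₁ / 2) • X) := by
  -- first-order condition for arbitrary vectors orthogonal to e₁
  have hfirst : ∀ W : V, ⟪W, e₁⟫ = 0 → ⟪W, K e₁ e₁⟫ = 0 := by
    intro W hW0
    by_cases hW : W = 0
    · simp [hW]
    · have hn : ‖W‖ ≠ 0 := by simpa using hW
      have hu : ‖(‖W‖⁻¹ • W)‖ = 1 := by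
        rw [norm_smul, norm_inv, norm_norm]
        field_simp
      have hue : ⟪(‖W‖⁻¹ • W), e₁⟫ = 0 := by
        rw [real_inner_smul_left, hW0]; ring
      have h := first_order_condition K hsymm hadj e₁ he₁ hmax _ hu hue
      rw [real_inner_smul_left] at h
      rcases mul_eq_zero.mp h with h' | h'
      · exact absurd h' (by simpa using hn)
      · exact h'
  -- hence K e₁ e₁ = l₁ • e₁
  have hee : ⟪e₁, e₁⟫ = (1:ℝ) := by
    rw [real_inner_self_eq_norm_sq, he₁]; norm_num
  have hl₁' : ⟪K e₁ e₁, e₁⟫ = l₁ := by rw [real_inner_comm]; exact hl₁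
  have hKe : K e₁ e₁ = l₁ • e₁ := by
    have hv : ⟪K e₁ e₁ - l₁ • e₁, e₁⟫ = 0 := by
      rw [inner_sub_left, real_inner_smul_left, hl₁', hee]; ring
    have h1 := hfirst _ hv
    have hvv : ⟪K e₁ e₁ - l₁ • e₁, K e₁ e₁ - l₁ • e₁⟫ = 0 := by
      rw [inner_sub_right, h1, real_inner_smul_right, hv]; ring
    exact sub_eq_zero.mp (inner_self_eq_zero.mp hvv)
  have hXX : ⟪X, X⟫ = (1:ℝ) := by
    rw [real_inner_self_eq_norm_sq, hX]; norm_num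
  have hμdef : ⟪e₁, K X X⟫ = ⟪K e₁ X, X⟫ := by rw [← hadj X e₁ X, hsymm X e₁]
  have hmain : ⟪K e₁ e₁, K X X⟫ = l₁ * ⟪K e₁ X, X⟫ := by
    rw [hKe, real_inner_smul_left, hμdef]
  have hCS : ⟪K e₁ X, X⟫ * ⟪K e₁ X, X⟫ ≤ ⟪K e₁ X, K e₁ X⟫ := by
    have := real_inner_mul_inner_self_le (K e₁ X) X
    rwa [hXX, mul_one] at this
  rw [hmain]
  refine ⟨by nlinarith [sq_nonneg (⟪K e₁ X, X⟫ - l₁ / 2)], ?_, ?_⟩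
  · intro h
    have hμval : ⟪K e₁ X, X⟫ = l₁ / 2 := by
      have hsq : (⟪K e₁ X, X⟫ - l₁ / 2) ^ 2 ≤ 0 := by nlinarith
      have h0 : (⟪K e₁ X, X⟫ - l₁ / 2) ^ 2 = 0 := le_antisymm hsq (sq_nonneg _)
      have := (pow_eq_zero_iff two_ne_zero).mp h0
      linarith
    have hYY : ⟪K e₁ X, K e₁ X⟫ = l₁ / 2 * (l₁ / 2) := by
      rw [hμval] at h; nlinarith
    have hz : ⟪K e₁ X - (l₁ / 2) • X, K e₁ X - (l₁ / 2) • X⟫ = (0:ℝ) := by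
      rw [real_inner_sub_sub_self, real_inner_smul_right, real_inner_smul_left,
        real_inner_smul_right, hXX, hYY, hμval]
      ring
    exact sub_eq_zero.mp (inner_self_eq_zero.mp hz)
  · intro h
    rw [h, real_inner_smul_left, real_inner_smul_left, real_inner_smul_right, hXX]
    ring
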